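/- Let f: [0,1] → ℝ≥0 be integrable, v(x,y) = ∫ₓʸ f, n ≥ 2, s ∈ (0, 1/(n-1)). Define Π as the set of tuples (x₁,…,x_{n-1}) with 0 ≤ x₁, x_i + s ≤ x_{i+1} for all i, and x_{n-1} + s ≤ 1 (representing an s-separated partition into pieces [0,x₁], [x₁+s, x₂], …, [x_{n-1}+s, 1], possibly with additional slack allowed in a general definition). Then the supremum of min-values over all s-separated partitions (where consecutive pieces are separated by length at least s, the first piece may start after 0, and the last piece may end before 1) equals the maximum of min-values over s-separated partitions in which consecutive pieces are separated by length exactly s, the first piece starts at 0, and the last piece ends at 1. -/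
import Mathlib


open MeasureTheory

noncomputable def cakeVal (f : ℝ → ℝ) (x y : ℝ) : ℝ := ∫ t in x..y, f t

/-- An `s`-separated partition of `[0,1]` into `n` intervals `[a j, b j]`:
the first piece may start after `0`, consecutive pieces are separated by at least `s`,
and the last piece may end before `1`. -/
def isSepPartition (n : ℕ) (s : ℝ) (a b : ℕ → ℝ) : Prop :=
  0 ≤ a 0 ∧ (∀ j, j < n → a j ≤ b j) ∧ (∀ j, j + 1 < n → b j + s ≤ a (j + 1)) ∧ b (n - 1) ≤ 1

/-- An exactly `s`-separated partition: first piece starts at `0`, consecutive pieces are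
separated by exactly `s`, last piece ends at `1`. -/
def isExactSepPartition (n : ℕ) (s : ℝ) (a b : ℕ → ℝ) : Prop :=
  a 0 = 0 ∧ (∀ j, j < n → a j ≤ b j) ∧ (∀ j, j + 1 < n → b j + s = a (j + 1)) ∧ b (n - 1) = 1

/-- The min-value of a partition. -/
noncomputable def minValue (f : ℝ → ℝ) (n : ℕ) (a b : ℕ → ℝ) : ℝ :=
  ⨅ j : Fin n, cakeVal f (a (j : ℕ)) (b (j : ℕ))

/-- Left endpoints of the canonical exact partition with right endpoints `c`. -/
noncomputable def Af (n : ℕ) (s : ℝ) (c : Fin (n-1) → ℝ) (j : ℕ) : ℝ :=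
  if h : 0 < j ∧ j < n then c ⟨j-1, by omega⟩ + s else 0

/-- Right endpoints. -/
noncomputable def Bf (n : ℕ) (c : Fin (n-1) → ℝ) (j : ℕ) : ℝ :=
  if h : j < n - 1 then c ⟨j, h⟩ else 1

lemma Af_zero (n : ℕ) (s : ℝ) (c : Fin (n-1) → ℝ) : Af n s c 0 = 0 := by simp [Af]

lemma Bf_last (n : ℕ) (c : Fin (n-1) → ℝ) : Bf n c (n-1) = 1 := by simp [Bf]

lemma AB_gap (n : ℕ) (s : ℝ) (c : Fin (n-1) → ℝ) {j : ℕ} (h : j + 1 < n) :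
    Bf n c j + s = Af n s c (j+1) := by
  rw [Af, Bf, dif_pos (show j < n - 1 by omega), dif_pos (show 0 < j + 1 ∧ j + 1 < n by omega)]
  norm_num

lemma Af_bounds (n : ℕ) (s : ℝ) (hs : 0 < s) (c : Fin (n-1) → ℝ)
    (hc : ∀ j, j < n → Af n s c j ≤ Bf n c j) :
    ∀ j, j < n → 0 ≤ Af n s c j := by
  intro j
  induction j with
  | zero => intro _; simp [Af]
  | succ k ih =>
    intro hk
    rw [← AB_gap n s c hk]
    have h1 := ih (by omega)
    have h2 := hc k (by omega)
    linarith

lemma Bf_mono (n : ℕ) (s : ℝ) (hs : 0 < s) (c : Fin (n-1) → ℝ)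
    (hc : ∀ j, j < n → Af n s c j ≤ Bf n c j) :
    ∀ j k, j ≤ k → k < n → Bf n c j ≤ Bf n c k := by
  intro j k hjk
  induction k with
  | zero =>
    intro _
    obtain rfl : j = 0 := by omega
    exact le_rfl
  | succ m ih =>
    intro hm
    rcases Nat.eq_or_lt_of_le hjk with h | h
    · simp [h]
    · have h1 : Bf n c j ≤ Bf n c m := ih (by omega) (by omega)
      have h2 : Bf n c m + s = Af n s c (m+1) := AB_gap n s c hm
      have h3 := hc (m+1) hm
      linarith

lemma Bf_le_one (n : ℕ) (s : ℝ) (hs : 0 < s) (c : Fin (n-1) → ℝ)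
    (hc : ∀ j, j < n → Af n s c j ≤ Bf n c j) :
    ∀ j, j < n → Bf n c j ≤ 1 := by
  intro j hj
  have := Bf_mono n s hs c hc j (n-1) (by omega) (by omega)
  rwa [Bf_last] at this

lemma continuousOn_finset_inf' {X ι : Type*} [TopologicalSpace X] {K : Set X}
    (t : Finset ι) (ht : t.Nonempty) (g : ι → X → ℝ)
    (hg : ∀ i ∈ t, ContinuousOn (g i) K) :
    ContinuousOn (fun x => t.inf' ht fun i => g i x) K := by
  induction ht using Finset.Nonempty.cons_induction with
  | singleton i =>
    rw [show (fun x => ({i} : Finset ι).inf' (Finset.singleton_nonempty i) fun j => g j x) = g i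
      from funext fun x => Finset.inf'_singleton _]
    exact hg i (by simp)
  | cons i u hit htne ih =>
    rw [show (fun x => (Finset.cons i u hit).inf' (Finset.cons_nonempty hit) fun j => g j x)
        = (fun x => g i x ⊓ u.inf' htne fun j => g j x)
      from funext fun x => Finset.inf'_cons htne _]
    exact ContinuousOn.inf' (hg i (by simp)) (ih fun j hj => hg j (by simp [hj]))

lemma cakeVal_eq (f : ℝ → ℝ) (hfi : IntervalIntegrable f volume 0 1)
    {x y : ℝ} (hx0 : 0 ≤ x) (hx1 : x ≤ 1) (hy0 : 0 ≤ y) (hy1 : y ≤ 1) :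
    cakeVal f x y = (∫ t in (0:ℝ)..y, f t) - ∫ t in (0:ℝ)..x, f t := by
  have h1 : IntervalIntegrable f volume 0 x := hfi.mono_set
    (by rw [Set.uIcc_of_le hx0, Set.uIcc_of_le (zero_le_one' ℝ)]
        exact Set.Icc_subset_Icc le_rfl hx1)
  have h2 : IntervalIntegrable f volume 0 y := hfi.mono_set
    (by rw [Set.uIcc_of_le hy0, Set.uIcc_of_le (zero_le_one' ℝ)]
        exact Set.Icc_subset_Icc le_rfl hy1)
  exact (intervalIntegral.integral_interval_sub_left h2 h1).symm

lemma minValue_mono (f : ℝ → ℝ) (hf0 : ∀ t, 0 ≤ f t) (hfi : IntervalIntegrable f volume 0 1)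
    (n : ℕ) (a b a' b' : ℕ → ℝ)
    (h : ∀ j : Fin n, 0 ≤ a (j:ℕ) ∧ a (j:ℕ) ≤ a' (j:ℕ) ∧ a' (j:ℕ) ≤ b' (j:ℕ) ∧
      b' (j:ℕ) ≤ b (j:ℕ) ∧ b (j:ℕ) ≤ 1) :
    minValue f n a' b' ≤ minValue f n a b := by
  unfold minValue
  apply ciInf_mono (Set.finite_range _).bddBelow
  intro j
  obtain ⟨h1, h2, h3, h4, h5⟩ := h j
  apply intervalIntegral.integral_mono_interval h2 h3 h4 (ae_of_all _ hf0)
  apply hfi.mono_set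
  rw [Set.uIcc_of_le (by linarith), Set.uIcc_of_le (zero_le_one' ℝ)]
  exact Set.Icc_subset_Icc h1 h5

lemma sep_a_nonneg (n : ℕ) (s : ℝ) (hs : 0 < s) (a' b' : ℕ → ℝ)
    (hp : isSepPartition n s a' b') : ∀ j, j < n → 0 ≤ a' j := by
  obtain ⟨h0, hab, hgap, _⟩ := hp
  intro j
  induction j with
  | zero => intro _; exact h0
  | succ k ih =>
    intro hk
    have h1 := ih (by omega)
    have h2 := hab k (by omega)
    have h3 := hgap k hk
    linarith

lemma sep_b_mono (n : ℕ) (s : ℝ) (hs : 0 < s) (a' b' : ℕ → ℝ)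
    (hp : isSepPartition n s a' b') : ∀ j k, j ≤ k → k < n → b' j ≤ b' k := by
  obtain ⟨h0, hab, hgap, _⟩ := hp
  intro j k hjk
  induction k with
  | zero =>
    intro _
    obtain rfl : j = 0 := by omega
    exact le_rfl
  | succ m ih =>
    intro hm
    rcases Nat.eq_or_lt_of_le hjk with h | h
    · simp [h]
    · have h1 : b' j ≤ b' m := ih (by omega) (by omega)
      have h2 := hgap m hm
      have h3 := hab (m+1) hm
      linarith

/-- The supremum of min-values over all `s`-separated partitions is attained at an exactly
`s`-separated partition. -/
theorem stmt_2 (n : ℕ) (hn : 2 ≤ n) (s : ℝ) (hs : 0 < s) (hs' : s < 1 / ((n : ℝ) - 1))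
    (f : ℝ → ℝ) (hf0 : ∀ t, 0 ≤ f t)
    (hfi : IntervalIntegrable f volume 0 1) :
    ∃ a b : ℕ → ℝ, isExactSepPartition n s a b ∧
      (∀ a' b' : ℕ → ℝ, isSepPartition n s a' b' → minValue f n a' b' ≤ minValue f n a b) ∧
      minValue f n a b =
        sSup {m | ∃ a' b' : ℕ → ℝ, isSepPartition n s a' b' ∧ m = minValue f n a' b'} := by
  haveI : Nonempty (Fin n) := ⟨⟨0, by omega⟩⟩
  have hn1 : (0:ℝ) < (n:ℝ) - 1 := by
    have h2 : (2:ℝ) ≤ (n:ℝ) := by exact_mod_cast hn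
    linarith
  have hns : s * ((n:ℝ) - 1) < 1 := (lt_div_iff₀ hn1).mp hs'
  set F : ℝ → ℝ := fun t => ∫ u in (0:ℝ)..t, f u with hFdef
  have hFc : ContinuousOn F (Set.Icc 0 1) := by
    have h := intervalIntegral.continuousOn_primitive_interval' hfi Set.left_mem_uIcc
    rwa [Set.uIcc_of_le (zero_le_one' ℝ)] at h
  set K : Set (Fin (n-1) → ℝ) := {c | ∀ j, j < n → Af n s c j ≤ Bf n c j} with hKdef
  have hKmem : ∀ c, c ∈ K ↔ ∀ j, j < n → Af n s c j ≤ Bf n c j := fun c => Iff.rfl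
  have hmem : ∀ c ∈ K, ∀ j, j < n → 0 ≤ Af n s c j ∧ Af n s c j ≤ Bf n c j ∧ Bf n c j ≤ 1 := by
    intro c hc j hj
    have hc' := (hKmem c).1 hc
    exact ⟨Af_bounds n s hs c hc' j hj, hc' j hj, Bf_le_one n s hs c hc' j hj⟩
  have hAcont : ∀ j : ℕ, Continuous fun c : Fin (n-1) → ℝ => Af n s c j := by
    intro j
    unfold Af
    by_cases h : 0 < j ∧ j < n
    · simp only [dif_pos h]; exact (continuous_apply _).add continuous_const
    · simp only [dif_neg h]; exact continuous_const
  have hBcont : ∀ j : ℕ, Continuous fun c : Fin (n-1) → ℝ => Bf n c j := by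
    intro j
    unfold Bf
    by_cases h : j < n - 1
    · simp only [dif_pos h]; exact continuous_apply _
    · simp only [dif_neg h]; exact continuous_const
  have hKclosed : IsClosed K := by
    have hKi : K = ⋂ (j : ℕ), {c : Fin (n-1) → ℝ | j < n → Af n s c j ≤ Bf n c j} := by
      ext c; simp only [hKdef, Set.mem_setOf_eq, Set.mem_iInter]
    rw [hKi]
    refine isClosed_iInter fun j => ?_
    by_cases hj : j < n
    · have he : {c : Fin (n-1) → ℝ | j < n → Af n s c j ≤ Bf n c j}
          = {c : Fin (n-1) → ℝ | Af n s c j ≤ Bf n c j} := by ext c; simp [hj]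
      rw [he]; exact isClosed_le (hAcont j) (hBcont j)
    · have he : {c : Fin (n-1) → ℝ | j < n → Af n s c j ≤ Bf n c j} = Set.univ := by
        ext c; simp [hj]
      rw [he]; exact isClosed_univ
  have hKcomp : IsCompact K := by
    refine IsCompact.of_isClosed_subset
      (isCompact_Icc (a := (fun _ => 0 : Fin (n-1) → ℝ)) (b := fun _ => 1)) hKclosed ?_
    intro c hc
    rw [Set.mem_Icc]
    have hc' := (hKmem c).1 hc
    constructor <;> intro i
    · have hi : (i:ℕ) < n := by omega
      have hBi : Bf n c (i:ℕ) = c i := by rw [Bf, dif_pos i.isLt]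
      obtain ⟨h1, h2, h3⟩ := hmem c hc (i:ℕ) hi
      have : (0:ℝ) ≤ c i := by rw [← hBi]; linarith
      exact this
    · have hi : (i:ℕ) < n := by omega
      have hBi : Bf n c (i:ℕ) = c i := by rw [Bf, dif_pos i.isLt]
      obtain ⟨h1, h2, h3⟩ := hmem c hc (i:ℕ) hi
      have : c i ≤ (1:ℝ) := by rw [← hBi]; exact h3
      exact this
  have hKne : K.Nonempty := by
    refine ⟨fun i => ((i:ℕ) : ℝ) * s, (hKmem _).2 fun j hj => ?_⟩
    by_cases h0 : 0 < j
    · rw [Af, dif_pos ⟨h0, hj⟩]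
      have hcast : ((j - 1 : ℕ) : ℝ) = (j:ℝ) - 1 := by
        rw [Nat.cast_sub (by omega : 1 ≤ j), Nat.cast_one]
      by_cases h1 : j < n - 1
      · rw [Bf, dif_pos h1]
        show ((j - 1 : ℕ) : ℝ) * s + s ≤ ((j : ℕ) : ℝ) * s
        rw [hcast]
        have : ((j:ℝ) - 1) * s + s = (j:ℝ) * s := by ring
        linarith
      · rw [Bf, dif_neg h1]
        show ((j - 1 : ℕ) : ℝ) * s + s ≤ 1
        have hj' : j = n - 1 := by omega
        have hcastj : ((j:ℕ) : ℝ) = (n:ℝ) - 1 := by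
          rw [hj', Nat.cast_sub (by omega : 1 ≤ n), Nat.cast_one]
        rw [hcast, hcastj]
        nlinarith [hns]
    · rw [Af, dif_neg (by omega : ¬(0 < j ∧ j < n))]
      obtain rfl : j = 0 := by omega
      rw [Bf, dif_pos (by omega : 0 < n - 1)]
      show (0:ℝ) ≤ (((0:ℕ)):ℝ) * s
      norm_num
  have hGcont : ContinuousOn (fun c => minValue f n (Af n s c) (Bf n c)) K := by
    have hHcont : ContinuousOn (fun c => Finset.univ.inf' Finset.univ_nonempty
        (fun j : Fin n => F (Bf n c (j:ℕ)) - F (Af n s c (j:ℕ)))) K := by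
      apply continuousOn_finset_inf'
      intro j _
      have hBm : Set.MapsTo (fun c : Fin (n-1) → ℝ => Bf n c (j:ℕ)) K (Set.Icc 0 1) := by
        intro c hc
        obtain ⟨h1, h2, h3⟩ := hmem c hc (j:ℕ) j.isLt
        exact ⟨le_trans h1 h2, h3⟩
      have hAm : Set.MapsTo (fun c : Fin (n-1) → ℝ => Af n s c (j:ℕ)) K (Set.Icc 0 1) := by
        intro c hc
        obtain ⟨h1, h2, h3⟩ := hmem c hc (j:ℕ) j.isLt
        exact ⟨h1, le_trans h2 h3⟩
      exact (hFc.comp (hBcont (j:ℕ)).continuousOn hBm).sub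
        (hFc.comp (hAcont (j:ℕ)).continuousOn hAm)
    refine hHcont.congr fun c hc => ?_
    unfold minValue
    rw [← Finset.inf'_univ_eq_ciInf]
    refine Finset.inf'_congr _ rfl fun j _ => ?_
    obtain ⟨h1, h2, h3⟩ := hmem c hc (j:ℕ) j.isLt
    exact cakeVal_eq f hfi h1 (le_trans h2 h3) (le_trans h1 h2) h3
  obtain ⟨c₀, hc₀K, hc₀max'⟩ := hKcomp.exists_isMaxOn hKne hGcont
  have hc₀max : ∀ c ∈ K, minValue f n (Af n s c) (Bf n c) ≤ minValue f n (Af n s c₀) (Bf n c₀) :=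
    fun c hc => hc₀max' hc
  have hc₀ := (hKmem c₀).1 hc₀K
  have hdom : ∀ a' b' : ℕ → ℝ, isSepPartition n s a' b' →
      minValue f n a' b' ≤ minValue f n (Af n s c₀) (Bf n c₀) := by
    intro a' b' hp
    obtain ⟨h0, hab, hgap, h1⟩ := hp
    have ha0 := sep_a_nonneg n s hs a' b' ⟨h0, hab, hgap, h1⟩
    have hbm := sep_b_mono n s hs a' b' ⟨h0, hab, hgap, h1⟩
    have hb1 : ∀ j, j < n → b' j ≤ 1 := fun j hj =>
      le_trans (hbm j (n-1) (by omega) (by omega)) h1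
    set c : Fin (n-1) → ℝ := fun i => b' (i:ℕ) with hcdef
    have hAle : ∀ j, j < n → Af n s c j ≤ a' j := by
      intro j hj
      by_cases h : 0 < j
      · rw [Af, dif_pos ⟨h, hj⟩]
        have hg := hgap (j-1) (by omega : (j-1)+1 < n)
        have hj1 : (j - 1) + 1 = j := by omega
        rw [hj1] at hg
        exact hg
      · rw [Af, dif_neg (by omega : ¬(0 < j ∧ j < n))]
        exact ha0 j hj
    have hBge : ∀ j, j < n → b' j ≤ Bf n c j := by
      intro j hj
      by_cases h : j < n - 1
      · rw [Bf, dif_pos h]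
      · rw [Bf, dif_neg h]
        exact hb1 j hj
    have hcK : c ∈ K := (hKmem c).2 fun j hj =>
      le_trans (hAle j hj) (le_trans (hab j hj) (hBge j hj))
    have hmono := minValue_mono f hf0 hfi n (Af n s c) (Bf n c) a' b' (fun j =>
      ⟨(hmem c hcK (j:ℕ) j.isLt).1, hAle (j:ℕ) j.isLt, hab (j:ℕ) j.isLt,
        hBge (j:ℕ) j.isLt, (hmem c hcK (j:ℕ) j.isLt).2.2⟩)
    exact le_trans hmono (hc₀max c hcK)
  have hexact : isExactSepPartition n s (Af n s c₀) (Bf n c₀) :=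
    ⟨Af_zero n s c₀, fun j hj => hc₀ j hj, fun j hj => AB_gap n s c₀ hj, Bf_last n c₀⟩
  have hsep : isSepPartition n s (Af n s c₀) (Bf n c₀) :=
    ⟨le_of_eq (Af_zero n s c₀).symm, fun j hj => hc₀ j hj,
      fun j hj => le_of_eq (AB_gap n s c₀ hj), le_of_eq (Bf_last n c₀)⟩
  refine ⟨Af n s c₀, Bf n c₀, hexact, hdom, ?_⟩
  have hmem' : minValue f n (Af n s c₀) (Bf n c₀) ∈
      {m | ∃ a' b' : ℕ → ℝ, isSepPartition n s a' b' ∧ m = minValue f n a' b'} :=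
    ⟨_, _, hsep, rfl⟩
  refine le_antisymm (le_csSup ⟨minValue f n (Af n s c₀) (Bf n c₀), ?_⟩ hmem') (csSup_le ⟨_, hmem'⟩ ?_)
  · rintro m ⟨x, y, hp, rfl⟩
    exact hdom x y hp
  · rintro m ⟨x, y, hp, rfl⟩
    exact hdom x y hp
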